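/- arXiv:1606.01610 — 5 statements merged into one kernel-verified Lean document; each statement's English description precedes it below -/
import Mathlib

section
/- Weak duality: for any u ∈ U(X,S) and any positive measure γ on X × X whose marginal difference γ₁ - γ₂ dominates μ in the order ⪰_{X,S}, one has ∫_X u dμ ≤ ∫_{X×X} ℓ_S(x,y) dγ(x,y). -/
open MeasureTheory

/-- `u` is a feasible mechanism: convex on `X` with a subgradient in `S` at
every point of `X`. -/
def MemU {n : ℕ} (X S : Set (Fin n → ℝ)) (u : (Fin n → ℝ) → ℝ) : Prop :=
  ConvexOn ℝ X u ∧ ∀ y ∈ X, ∃ s ∈ S, ∀ x ∈ X, u y + ∑ i, s i * (x i - y i) ≤ u x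

/-- `ℓ_S(x,y) = sup_{s ∈ S} s · (x - y)`. -/
noncomputable def ellS {n : ℕ} (S : Set (Fin n → ℝ)) (x y : Fin n → ℝ) : ℝ :=
  sSup {r : ℝ | ∃ s ∈ S, r = ∑ i, s i * (x i - y i)}

/-- weak duality: for any feasible mechanism `u ∈ U(X,S)` and any
positive measure `γ` on `X × X` whose marginal difference `γ₁ - γ₂` dominates the
signed measure `μ = μ₊ - μ₋` in the order `⪰_{X,S}`, one has
`∫_X u dμ ≤ ∫_{X×X} ℓ_S(x,y) dγ(x,y)`. -/
theorem weak_duality {n : ℕ} (X S : Set (Fin n → ℝ))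
    (hX : IsCompact X) (hXc : Convex ℝ X)
    (hSne : S.Nonempty) (hScl : IsClosed S) (hSb : Bornology.IsBounded S)
    (μp μm : Measure (Fin n → ℝ)) [IsFiniteMeasure μp] [IsFiniteMeasure μm]
    (hμp : μp Xᶜ = 0) (hμm : μm Xᶜ = 0)
    (γ : Measure ((Fin n → ℝ) × (Fin n → ℝ))) [IsFiniteMeasure γ]
    (hγX : γ (X ×ˢ X)ᶜ = 0)
    (hdom : ∀ v : (Fin n → ℝ) → ℝ, MemU X S v →
      (∫ x, v x ∂(γ.map Prod.fst)) - (∫ x, v x ∂(γ.map Prod.snd)) ≥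
        (∫ x, v x ∂μp) - (∫ x, v x ∂μm))
    (u : (Fin n → ℝ) → ℝ) (hu : MemU X S u) :
    (∫ x, u x ∂μp) - (∫ x, u x ∂μm) ≤ ∫ p, ellS S p.1 p.2 ∂γ := by
  classical
  obtain ⟨s₀, hs₀⟩ := hSne
  obtain ⟨B, hB0, hB⟩ := hSb.exists_pos_norm_le
  set C : ℝ := B * n with hCdef
  have hC0 : 0 ≤ C := by positivity
  -- basic estimate
  have hsum : ∀ s ∈ S, ∀ v : Fin n → ℝ, ∑ i, s i * v i ≤ C * ‖v‖ := by
    intro s hs v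
    calc ∑ i, s i * v i ≤ ∑ i, |s i * v i| :=
          Finset.sum_le_sum fun i _ => le_abs_self _
      _ = ∑ i, |s i| * |v i| := by simp [abs_mul]
      _ ≤ ∑ _i : Fin n, B * ‖v‖ := by
          refine Finset.sum_le_sum fun i _ => mul_le_mul ?_ ?_ (abs_nonneg _) hB0.le
          · exact (Real.norm_eq_abs (s i)) ▸ (norm_le_pi_norm s i).trans (hB s hs)
          · exact (Real.norm_eq_abs (v i)) ▸ norm_le_pi_norm v i
      _ = C * ‖v‖ := by simp [hCdef]; ring
  have hsum' : ∀ s ∈ S, ∀ x y : Fin n → ℝ,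
      ∑ i, s i * (x i - y i) ≤ C * ‖x - y‖ := by
    intro s hs x y
    simpa [Pi.sub_apply] using hsum s hs (x - y)
  have hEne : ∀ x y : Fin n → ℝ,
      {r : ℝ | ∃ s ∈ S, r = ∑ i, s i * (x i - y i)}.Nonempty :=
    fun x y => ⟨_, s₀, hs₀, rfl⟩
  have hEbdd : ∀ x y : Fin n → ℝ,
      BddAbove {r : ℝ | ∃ s ∈ S, r = ∑ i, s i * (x i - y i)} := by
    intro x y
    exact ⟨C * ‖x - y‖, by rintro r ⟨s, hs, rfl⟩; exact hsum' s hs x y⟩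
  -- one-sided Lipschitz bound for ellS
  have hdiff : ∀ p q : (Fin n → ℝ) × (Fin n → ℝ),
      ellS S p.1 p.2 ≤ ellS S q.1 q.2 + C * ‖p.1 - q.1‖ + C * ‖q.2 - p.2‖ := by
    intro p q
    refine csSup_le (hEne _ _) ?_
    rintro r ⟨s, hs, rfl⟩
    have hsplit : ∑ i, s i * (p.1 i - p.2 i)
        = (∑ i, s i * (q.1 i - q.2 i)) + ((∑ i, s i * (p.1 i - q.1 i))
            + (∑ i, s i * (q.2 i - p.2 i))) := by
      rw [← Finset.sum_add_distrib, ← Finset.sum_add_distrib]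
      exact Finset.sum_congr rfl fun i _ => by ring
    rw [hsplit]
    have h1 : ∑ i, s i * (q.1 i - q.2 i) ≤ ellS S q.1 q.2 :=
      le_csSup (hEbdd _ _) ⟨s, hs, rfl⟩
    have h2 := hsum' s hs p.1 q.1
    have h3 := hsum' s hs q.2 p.2
    linarith
  -- ellS is Lipschitz, hence continuous
  have hlipF : LipschitzWith (2 * C).toNNReal (fun p : (Fin n → ℝ) × (Fin n → ℝ) =>
      ellS S p.1 p.2) := by
    apply LipschitzWith.of_dist_le_mul
    intro p q
    have hc : ((2 * C).toNNReal : ℝ) = 2 * C := Real.coe_toNNReal _ (by positivity)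
    rw [Real.dist_eq, hc, abs_sub_le_iff]
    have e1 : ‖p.1 - q.1‖ ≤ dist p q := by
      rw [← dist_eq_norm]; rw [Prod.dist_eq]; exact le_max_left _ _
    have e2 : ‖q.2 - p.2‖ ≤ dist p q := by
      rw [← dist_eq_norm, dist_comm]; rw [Prod.dist_eq]; exact le_max_right _ _
    have e1' : ‖q.1 - p.1‖ ≤ dist p q := by
      rw [← dist_eq_norm, dist_comm]; rw [Prod.dist_eq]; exact le_max_left _ _
    have e2' : ‖p.2 - q.2‖ ≤ dist p q := by
      rw [← dist_eq_norm]; rw [Prod.dist_eq]; exact le_max_right _ _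
    have d1 := hdiff p q
    have d2 := hdiff q p
    constructor
    · nlinarith [mul_le_mul_of_nonneg_left e1 hC0, mul_le_mul_of_nonneg_left e2 hC0]
    · nlinarith [mul_le_mul_of_nonneg_left e1' hC0, mul_le_mul_of_nonneg_left e2' hC0]
  have hcontF : Continuous (fun p : (Fin n → ℝ) × (Fin n → ℝ) => ellS S p.1 p.2) :=
    hlipF.continuous
  -- u is Lipschitz on X
  have hulip : LipschitzOnWith C.toNNReal u X := by
    rw [lipschitzOnWith_iff_dist_le_mul]
    intro x hx y hy
    have key : ∀ a ∈ X, ∀ b ∈ X, u a - u b ≤ C * ‖a - b‖ := by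
      intro a ha b hb
      obtain ⟨s, hsS, hsub⟩ := hu.2 a ha
      have h1 := hsub b hb
      have h2 : ∑ i, s i * (a i - b i) ≤ C * ‖a - b‖ := hsum' s hsS a b
      have h3 : ∑ i, s i * (b i - a i) = -∑ i, s i * (a i - b i) := by
        rw [← Finset.sum_neg_distrib]
        exact Finset.sum_congr rfl fun i _ => by ring
      linarith [h1, h2, h3 ▸ h1]
    rw [Real.dist_eq, abs_sub_le_iff, Real.coe_toNNReal _ hC0]
    constructor
    · exact (key x hx y hy).trans (by rw [dist_eq_norm])
    · exact (key y hy x hx).trans (by rw [dist_eq_norm, norm_sub_rev])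
  obtain ⟨g, hg, hgu⟩ := hulip.extend_real
  have hXm : MeasurableSet X := hX.isClosed.measurableSet
  -- a.e. membership facts
  have haeγ : ∀ᵐ p ∂γ, p ∈ X ×ˢ X := by
    rw [ae_iff]; exact hγX
  have haep : ∀ᵐ x ∂μp, x ∈ X := by rw [ae_iff]; exact hμp
  have haem : ∀ᵐ x ∂μm, x ∈ X := by rw [ae_iff]; exact hμm
  have hmapf : (γ.map Prod.fst) Xᶜ = 0 := by
    rw [Measure.map_apply measurable_fst hXm.compl]
    refine measure_mono_null ?_ hγX
    intro p hp
    simp only [Set.mem_preimage, Set.mem_compl_iff, Set.mem_prod] at hp ⊢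
    tauto
  have hmaps : (γ.map Prod.snd) Xᶜ = 0 := by
    rw [Measure.map_apply measurable_snd hXm.compl]
    refine measure_mono_null ?_ hγX
    intro p hp
    simp only [Set.mem_preimage, Set.mem_compl_iff, Set.mem_prod] at hp ⊢
    tauto
  have haef : ∀ᵐ x ∂(γ.map Prod.fst), x ∈ X := by rw [ae_iff]; exact hmapf
  have haes : ∀ᵐ x ∂(γ.map Prod.snd), x ∈ X := by rw [ae_iff]; exact hmaps
  -- replace u by g in all integrals
  have hup : ∫ x, u x ∂μp = ∫ x, g x ∂μp :=
    integral_congr_ae (haep.mono fun x hx => hgu hx)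
  have hum : ∫ x, u x ∂μm = ∫ x, g x ∂μm :=
    integral_congr_ae (haem.mono fun x hx => hgu hx)
  have huf : ∫ x, u x ∂(γ.map Prod.fst) = ∫ x, g x ∂(γ.map Prod.fst) :=
    integral_congr_ae (haef.mono fun x hx => hgu hx)
  have hus : ∫ x, u x ∂(γ.map Prod.snd) = ∫ x, g x ∂(γ.map Prod.snd) :=
    integral_congr_ae (haes.mono fun x hx => hgu hx)
  have hmapf' : ∫ x, g x ∂(γ.map Prod.fst) = ∫ p, g p.1 ∂γ :=
    integral_map measurable_fst.aemeasurable hg.continuous.aestronglyMeasurable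
  have hmaps' : ∫ x, g x ∂(γ.map Prod.snd) = ∫ p, g p.2 ∂γ :=
    integral_map measurable_snd.aemeasurable hg.continuous.aestronglyMeasurable
  -- bounds on compact sets
  obtain ⟨M, hM⟩ := hX.exists_bound_of_continuousOn hg.continuous.continuousOn
  obtain ⟨M2, hM2⟩ := (hX.prod hX).exists_bound_of_continuousOn hcontF.continuousOn
  -- integrability
  have int1 : Integrable (fun p : (Fin n → ℝ) × (Fin n → ℝ) => g p.1) γ := by
    refine Integrable.mono' (integrable_const M)
      ((hg.continuous.comp continuous_fst).aestronglyMeasurable) ?_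
    exact haeγ.mono fun p hp => hM p.1 hp.1
  have int2 : Integrable (fun p : (Fin n → ℝ) × (Fin n → ℝ) => g p.2) γ := by
    refine Integrable.mono' (integrable_const M)
      ((hg.continuous.comp continuous_snd).aestronglyMeasurable) ?_
    exact haeγ.mono fun p hp => hM p.2 hp.2
  have intF : Integrable (fun p : (Fin n → ℝ) × (Fin n → ℝ) => ellS S p.1 p.2) γ := by
    refine Integrable.mono' (integrable_const M2) hcontF.aestronglyMeasurable ?_
    exact haeγ.mono fun p hp => hM2 p hp
  -- pointwise comparison
  have hpt : ∀ᵐ p ∂γ, g p.1 - g p.2 ≤ ellS S p.1 p.2 := by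
    refine haeγ.mono fun p hp => ?_
    rw [← hgu hp.1, ← hgu hp.2]
    obtain ⟨s, hsS, hsub⟩ := hu.2 p.1 hp.1
    have h1 := hsub p.2 hp.2
    have h3 : ∑ i, s i * (p.2 i - p.1 i) = -∑ i, s i * (p.1 i - p.2 i) := by
      rw [← Finset.sum_neg_distrib]
      exact Finset.sum_congr rfl fun i _ => by ring
    have h4 : u p.1 - u p.2 ≤ ∑ i, s i * (p.1 i - p.2 i) := by
      rw [h3] at h1; linarith
    exact h4.trans (le_csSup (hEbdd _ _) ⟨s, hsS, rfl⟩)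
  -- put everything together
  have hmain := hdom u hu
  calc (∫ x, u x ∂μp) - (∫ x, u x ∂μm)
      ≤ (∫ x, u x ∂(γ.map Prod.fst)) - (∫ x, u x ∂(γ.map Prod.snd)) := hmain
    _ = (∫ p, g p.1 ∂γ) - (∫ p, g p.2 ∂γ) := by rw [huf, hus, hmapf', hmaps']
    _ = ∫ p, (g p.1 - g p.2) ∂γ := (integral_sub int1 int2).symm
    _ ≤ ∫ p, ellS S p.1 p.2 ∂γ := integral_mono_ae (int1.sub int2) intF hpt
end

section
/- Complementary slackness: if u* ∈ U(X,S) and feasible γ* achieve equality ∫ u* dμ = ∫ ℓ_S dγ*, then ∫ u* dμ = ∫ u* d(γ₁* − γ₂*) and ℓ_S(x,y) = u*(x) − u*(y) for γ*-almost every (x,y). -/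
open MeasureTheory

section Aux

variable {n : ℕ} {S : Set (Fin n → ℝ)}

/-- Basic bound on the dot product. -/
lemma dot_abs_le {M : ℝ} {s : Fin n → ℝ} (hs : ‖s‖ ≤ M) (d : Fin n → ℝ) :
    |∑ i, s i * d i| ≤ (n * M) * ‖d‖ := by
  calc |∑ i, s i * d i| ≤ ∑ i, |s i * d i| := Finset.abs_sum_le_sum_abs _ _
    _ ≤ ∑ _i : Fin n, M * ‖d‖ := by
        apply Finset.sum_le_sum
        intro i _
        rw [abs_mul]
        have h1 : |s i| ≤ M := le_trans (norm_le_pi_norm s i) hs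
        have h2 : |d i| ≤ ‖d‖ := norm_le_pi_norm d i
        have h0 : (0:ℝ) ≤ |d i| := abs_nonneg _
        nlinarith [abs_nonneg (s i)]
    _ = (n * M) * ‖d‖ := by
        rw [Finset.sum_const, Finset.card_univ, Fintype.card_fin]
        push_cast; ring

lemma ell_set_nonempty (hSne : S.Nonempty) (x y : Fin n → ℝ) :
    {r : ℝ | ∃ s ∈ S, r = ∑ i, s i * (x i - y i)}.Nonempty := by
  obtain ⟨s, hs⟩ := hSne
  exact ⟨∑ i, s i * (x i - y i), s, hs, rfl⟩

lemma ell_set_bddAbove {M : ℝ} (hM : ∀ s ∈ S, ‖s‖ ≤ M) (x y : Fin n → ℝ) :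
    BddAbove {r : ℝ | ∃ s ∈ S, r = ∑ i, s i * (x i - y i)} := by
  refine ⟨(n * M) * ‖x - y‖, ?_⟩
  rintro r ⟨s, hs, rfl⟩
  have := dot_abs_le (hM s hs) (x - y)
  have h2 : ∀ i, (x - y) i = x i - y i := fun i => rfl
  simp only [h2] at this
  exact le_trans (le_abs_self _) this

lemma dot_le_ell {M : ℝ} (hM : ∀ s ∈ S, ‖s‖ ≤ M) {s : Fin n → ℝ} (hs : s ∈ S)
    (x y : Fin n → ℝ) : ∑ i, s i * (x i - y i) ≤ ellS S x y :=
  le_csSup (ell_set_bddAbove hM x y) ⟨s, hs, rfl⟩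

lemma ell_lipschitz {M : ℝ} (hSne : S.Nonempty) (hM : ∀ s ∈ S, ‖s‖ ≤ M) :
    ∀ p q : (Fin n → ℝ) × (Fin n → ℝ),
      ellS S p.1 p.2 ≤ ellS S q.1 q.2 + (2 * (n * M)) * dist p q := by
  intro p q
  apply csSup_le (ell_set_nonempty hSne _ _)
  rintro r ⟨s, hs, rfl⟩
  have key : ∑ i, s i * (p.1 i - p.2 i) - ∑ i, s i * (q.1 i - q.2 i)
      ≤ (2 * (n * M)) * dist p q := by
    have h1 : ∑ i, s i * (p.1 i - p.2 i) - ∑ i, s i * (q.1 i - q.2 i)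
        = (∑ i, s i * ((p.1 - q.1) i)) + ∑ i, s i * (-((p.2 - q.2) i)) := by
      rw [← Finset.sum_add_distrib, ← Finset.sum_sub_distrib]
      congr 1; funext i; simp [Pi.sub_apply]; ring
    rw [h1]
    have h2 := le_trans (le_abs_self _) (dot_abs_le (hM s hs) (p.1 - q.1))
    have h3 := le_trans (le_abs_self _) (dot_abs_le (hM s hs) (-(p.2 - q.2)))
    have h4 : ‖p.1 - q.1‖ ≤ dist p q := by
      rw [← dist_eq_norm, Prod.dist_eq]; exact le_max_left _ _
    have h5 : ‖-(p.2 - q.2)‖ ≤ dist p q := by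
      rw [norm_neg, ← dist_eq_norm, Prod.dist_eq]; exact le_max_right _ _
    have hnM : (0:ℝ) ≤ n * M := by
      obtain ⟨s₀, hs₀⟩ := hSne
      have := le_trans (norm_nonneg s₀) (hM s₀ hs₀)
      positivity
    have h6 : ∑ i, s i * (-((p.2 - q.2)) i) = ∑ i, s i * (-(p.2 - q.2)) i := rfl
    nlinarith [mul_le_mul_of_nonneg_left h4 hnM, mul_le_mul_of_nonneg_left h5 hnM]
  have := dot_le_ell hM hs q.1 q.2
  linarith

lemma ell_continuous {M : ℝ} (hSne : S.Nonempty) (hM : ∀ s ∈ S, ‖s‖ ≤ M) :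
    Continuous (fun p : (Fin n → ℝ) × (Fin n → ℝ) => ellS S p.1 p.2) := by
  apply (LipschitzWith.of_dist_le' (K := 2 * (n * M)) ?_).continuous
  intro p q
  rw [Real.dist_eq, abs_sub_le_iff]
  constructor
  · have := ell_lipschitz hSne hM p q; linarith
  · have := ell_lipschitz hSne hM q p; rw [dist_comm]; linarith

end Aux

/-- complementary slackness: if `u* ∈ U(X,S)` and a feasible
`γ*` achieve equality `∫ u* dμ = ∫ ℓ_S dγ*`, then
`∫ u* dμ = ∫ u* d(γ₁* − γ₂*)` and `ℓ_S(x,y) = u*(x) − u*(y)` `γ*`-a.e. -/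
theorem complementary_slackness {n : ℕ} (X S : Set (Fin n → ℝ))
    (hX : IsCompact X) (hXc : Convex ℝ X)
    (hSne : S.Nonempty) (hScl : IsClosed S) (hSb : Bornology.IsBounded S)
    (μp μm : Measure (Fin n → ℝ)) [IsFiniteMeasure μp] [IsFiniteMeasure μm]
    (hμp : μp Xᶜ = 0) (hμm : μm Xᶜ = 0)
    (ustar : (Fin n → ℝ) → ℝ) (hu : MemU X S ustar)
    (γ : Measure ((Fin n → ℝ) × (Fin n → ℝ))) [IsFiniteMeasure γ]
    (hγX : γ (X ×ˢ X)ᶜ = 0)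
    (hdom : ∀ v : (Fin n → ℝ) → ℝ, MemU X S v →
      (∫ x, v x ∂(γ.map Prod.fst)) - (∫ x, v x ∂(γ.map Prod.snd)) ≥
        (∫ x, v x ∂μp) - (∫ x, v x ∂μm))
    (heq : (∫ x, ustar x ∂μp) - (∫ x, ustar x ∂μm) = ∫ p, ellS S p.1 p.2 ∂γ) :
    ((∫ x, ustar x ∂μp) - (∫ x, ustar x ∂μm) =
      (∫ x, ustar x ∂(γ.map Prod.fst)) - (∫ x, ustar x ∂(γ.map Prod.snd))) ∧
    (∀ᵐ p ∂γ, ellS S p.1 p.2 = ustar p.1 - ustar p.2) := by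
  classical
  -- bound on S
  obtain ⟨M₀, hM₀⟩ := hSb.subset_closedBall 0
  set M : ℝ := max M₀ 0 with hMdef
  have hM : ∀ s ∈ S, ‖s‖ ≤ M := by
    intro s hs
    have := hM₀ hs
    rw [Metric.mem_closedBall, dist_zero_right] at this
    exact le_trans this (le_max_left _ _)
  have hMn : (0:ℝ) ≤ n * M := by positivity
  -- key : for x y ∈ X, ustar x - ustar y ≤ ellS S x y, and |ustar x - ustar y| ≤ nM ‖x-y‖
  have hkey : ∀ x ∈ X, ∀ y ∈ X, ustar x - ustar y ≤ ellS S x y ∧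
      ustar x - ustar y ≤ (n * M) * dist x y := by
    intro x hx y hy
    obtain ⟨s, hsS, hsub⟩ := hu.2 x hx
    have h1 := hsub y hy
    have h2 : ustar x - ustar y ≤ ∑ i, s i * (x i - y i) := by
      have : ∑ i, s i * (y i - x i) = - ∑ i, s i * (x i - y i) := by
        rw [← Finset.sum_neg_distrib]; congr 1; funext i; ring
      rw [this] at h1; linarith
    constructor
    · exact le_trans h2 (dot_le_ell hM hsS x y)
    · refine le_trans h2 ?_
      have := le_trans (le_abs_self _) (dot_abs_le (hM s hsS) (x - y))
      have hd : ∀ i, (x - y) i = x i - y i := fun i => rfl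
      simp only [hd] at this
      rw [dist_eq_norm]; exact this
  have hLipOn : LipschitzOnWith (Real.toNNReal (n * M)) ustar X := by
    apply LipschitzOnWith.of_dist_le' 
    intro x hx y hy
    rw [Real.dist_eq, abs_sub_le_iff]
    exact ⟨(hkey x hx y hy).2, by rw [dist_comm]; exact (hkey y hy x hx).2⟩
  obtain ⟨g, hgLip, hgEq⟩ := hLipOn.extend_real
  have hgc : Continuous g := hgLip.continuous
  -- a.e. membership
  have haep : ∀ᵐ x ∂μp, x ∈ X := by
    rw [ae_iff]; simpa [Set.compl_def] using hμp
  have haem : ∀ᵐ x ∂μm, x ∈ X := by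
    rw [ae_iff]; simpa [Set.compl_def] using hμm
  have haeγ : ∀ᵐ p ∂γ, p ∈ X ×ˢ X := by
    rw [ae_iff]; simpa [Set.compl_def] using hγX
  have hXXcompact : IsCompact (X ×ˢ X) := hX.prod hX
  -- map measures concentrated on X
  have hXmeas : MeasurableSet X := hX.isClosed.measurableSet
  have hset : {x : Fin n → ℝ | ¬ x ∈ X} = Xᶜ := rfl
  have haeγ1 : ∀ᵐ x ∂(γ.map Prod.fst), x ∈ X := by
    rw [ae_iff, hset, Measure.map_apply measurable_fst hXmeas.compl]
    refine measure_mono_null ?_ hγX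
    intro p hp
    simp only [Set.mem_preimage, Set.mem_compl_iff, Set.mem_prod] at *
    tauto
  have haeγ2 : ∀ᵐ x ∂(γ.map Prod.snd), x ∈ X := by
    rw [ae_iff, hset, Measure.map_apply measurable_snd hXmeas.compl]
    refine measure_mono_null ?_ hγX
    intro p hp
    simp only [Set.mem_preimage, Set.mem_compl_iff, Set.mem_prod] at *
    tauto
  -- ustar =ᵐ g
  have hcong : ∀ (ν : Measure (Fin n → ℝ)), (∀ᵐ x ∂ν, x ∈ X) → ∫ x, ustar x ∂ν = ∫ x, g x ∂ν := by
    intro ν hν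
    exact integral_congr_ae (hν.mono fun x hx => hgEq hx)
  -- integrability of g
  have hgint : ∀ (ν : Measure (Fin n → ℝ)) [IsFiniteMeasure ν], (∀ᵐ x ∂ν, x ∈ X) → Integrable g ν := by
    intro ν _ hν
    have h1 : IntegrableOn g X ν := hgc.continuousOn.integrableOn_compact hX
    rwa [IntegrableOn, Measure.restrict_eq_self_of_ae_mem hν] at h1
  have hres : γ.restrict (X ×ˢ X) = γ := Measure.restrict_eq_self_of_ae_mem haeγ
  have hgint1 : Integrable (fun p : (Fin n → ℝ) × (Fin n → ℝ) => g p.1) γ := by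
    have h1 : IntegrableOn (fun p : (Fin n → ℝ) × (Fin n → ℝ) => g p.1) (X ×ˢ X) γ :=
      (hgc.comp continuous_fst).continuousOn.integrableOn_compact hXXcompact
    rwa [IntegrableOn, hres] at h1
  have hgint2 : Integrable (fun p : (Fin n → ℝ) × (Fin n → ℝ) => g p.2) γ := by
    have h1 : IntegrableOn (fun p : (Fin n → ℝ) × (Fin n → ℝ) => g p.2) (X ×ˢ X) γ :=
      (hgc.comp continuous_snd).continuousOn.integrableOn_compact hXXcompact
    rwa [IntegrableOn, hres] at h1
  have hellc : Continuous (fun p : (Fin n → ℝ) × (Fin n → ℝ) => ellS S p.1 p.2) :=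
    ell_continuous hSne hM
  have hellint : Integrable (fun p : (Fin n → ℝ) × (Fin n → ℝ) => ellS S p.1 p.2) γ := by
    have h1 : IntegrableOn (fun p : (Fin n → ℝ) × (Fin n → ℝ) => ellS S p.1 p.2) (X ×ˢ X) γ :=
      hellc.continuousOn.integrableOn_compact hXXcompact
    rwa [IntegrableOn, hres] at h1
  -- rewrite map integrals
  have hmap1 : ∫ x, ustar x ∂(γ.map Prod.fst) = ∫ p, g p.1 ∂γ := by
    rw [hcong _ haeγ1, integral_map measurable_fst.aemeasurable hgc.aestronglyMeasurable]
  have hmap2 : ∫ x, ustar x ∂(γ.map Prod.snd) = ∫ p, g p.2 ∂γ := by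
    rw [hcong _ haeγ2, integral_map measurable_snd.aemeasurable hgc.aestronglyMeasurable]
  -- pointwise a.e. inequality
  have haele : ∀ᵐ p ∂γ, g p.1 - g p.2 ≤ ellS S p.1 p.2 := by
    refine haeγ.mono fun p hp => ?_
    obtain ⟨hp1, hp2⟩ := hp
    rw [← hgEq hp1, ← hgEq hp2]
    exact (hkey p.1 hp1 p.2 hp2).1
  -- the squeezing
  have hsubint : Integrable (fun p : (Fin n → ℝ) × (Fin n → ℝ) => g p.1 - g p.2) γ :=
    hgint1.sub hgint2
  set I : ℝ := (∫ x, ustar x ∂μp) - (∫ x, ustar x ∂μm) with hI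
  have hJle : ∫ p, (g p.1 - g p.2) ∂γ ≤ ∫ p, ellS S p.1 p.2 ∂γ :=
    integral_mono_ae hsubint hellint haele
  have hJeq : ∫ p, (g p.1 - g p.2) ∂γ =
      (∫ x, ustar x ∂(γ.map Prod.fst)) - (∫ x, ustar x ∂(γ.map Prod.snd)) := by
    exact integral_sub hgint1 hgint2 ▸ by rw [hmap1, hmap2]
  have hdomu := hdom ustar hu
  have hfirst : I = (∫ x, ustar x ∂(γ.map Prod.fst)) - (∫ x, ustar x ∂(γ.map Prod.snd)) := by
    have h1 : (∫ x, ustar x ∂(γ.map Prod.fst)) - (∫ x, ustar x ∂(γ.map Prod.snd)) ≤ I := by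
      rw [← hJeq, heq]; exact hJle
    linarith [hdomu]
  refine ⟨hfirst, ?_⟩
  -- second part
  have hzero : ∫ p, (ellS S p.1 p.2 - (g p.1 - g p.2)) ∂γ = 0 := by
    rw [integral_sub hellint hsubint, hJeq, ← hfirst, heq, sub_self]
  have hnonneg : 0 ≤ᵐ[γ] fun p => ellS S p.1 p.2 - (g p.1 - g p.2) :=
    haele.mono fun p hp => by simp [sub_nonneg, hp]
  have hae0 := (integral_eq_zero_iff_of_nonneg_ae hnonneg
    (hellint.sub hsubint)).mp hzero
  filter_upwards [hae0, haeγ] with p h0 hp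
  obtain ⟨hp1, hp2⟩ := hp
  have : ellS S p.1 p.2 - (g p.1 - g p.2) = 0 := h0
  rw [← hgEq hp1, ← hgEq hp2] at this
  linarith
end

section
/- Strassen's theorem in one dimension: if ν₊ and ν₋ are finite positive measures on an interval [a,b] ⊆ ℝ with ν₊([a,b]) = ν₋([a,b]) and ν₊ stochastically dominates ν₋ (i.e., ν₊([t,b]) ≥ ν₋([t,b]) for all t), then there exists a positive measure γ on [a,b] × [a,b] with first marginal ν₊ and second marginal ν₋ such that x ≥ y γ-almost surely. -/
open MeasureTheory

open Set Filter Topology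
open scoped ENNReal

namespace StrassenAux

/-- Quantile function of `ν` relative to the interval `[a,b]`. -/
noncomputable def QF (a b : ℝ) (ν : Measure ℝ) (u : ℝ) : ℝ :=
  sInf (insert b {x | a ≤ x ∧ u ≤ (ν (Iic x)).toReal})

variable {a b : ℝ}

lemma Tset_nonempty (ν : Measure ℝ) (u : ℝ) :
    (insert b {x | a ≤ x ∧ u ≤ (ν (Iic x)).toReal}).Nonempty :=
  ⟨b, mem_insert _ _⟩

lemma Tset_bddBelow (hab : a ≤ b) (ν : Measure ℝ) (u : ℝ) :
    BddBelow (insert b {x | a ≤ x ∧ u ≤ (ν (Iic x)).toReal}) := by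
  refine ⟨a, ?_⟩
  rintro x (rfl | hx)
  · exact hab
  · exact hx.1

lemma QF_ge (hab : a ≤ b) (ν : Measure ℝ) (u : ℝ) : a ≤ QF a b ν u := by
  refine le_csInf (Tset_nonempty ν u) ?_
  rintro x (rfl | hx)
  · exact hab
  · exact hx.1

lemma QF_le_b (hab : a ≤ b) (ν : Measure ℝ) (u : ℝ) : QF a b ν u ≤ b :=
  csInf_le (Tset_bddBelow hab ν u) (mem_insert _ _)

lemma QF_mono (hab : a ≤ b) (ν : Measure ℝ) : Monotone (QF a b ν) := by
  intro u v huv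
  refine csInf_le_csInf (Tset_bddBelow hab ν u) (Tset_nonempty ν v) ?_
  rintro x (rfl | hx)
  · exact mem_insert _ _
  · exact Or.inr ⟨hx.1, huv.trans hx.2⟩

lemma QF_comp (hab : a ≤ b) (ν ν' : Measure ℝ)
    (h : ∀ x, (ν (Iic x)).toReal ≤ (ν' (Iic x)).toReal) (u : ℝ) :
    QF a b ν' u ≤ QF a b ν u := by
  refine csInf_le_csInf (Tset_bddBelow hab ν' u) (Tset_nonempty ν u) ?_
  rintro x (rfl | hx)
  · exact mem_insert _ _
  · exact Or.inr ⟨hx.1, hx.2.trans (h x)⟩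

/-- volume of `Iic c ∩ Ioo 0 M`. -/
lemma vol_Iic_inter (M : ℝ) {c : ℝ} (hc0 : 0 ≤ c) (hcM : c ≤ M) :
    volume (Iic c ∩ Ioo 0 M) = ENNReal.ofReal c := by
  rcases lt_or_eq_of_le hcM with h | rfl
  · have : Iic c ∩ Ioo 0 M = Ioc 0 c := by
      ext u
      simp only [mem_inter_iff, mem_Iic, mem_Ioo, mem_Ioc]
      constructor
      · rintro ⟨h1, h2, _⟩; exact ⟨h2, h1⟩
      · rintro ⟨h1, h2⟩; exact ⟨h2, h1, lt_of_le_of_lt h2 h⟩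
    rw [this, Real.volume_Ioc, sub_zero]
  · have : Iic c ∩ Ioo 0 c = Ioo 0 c := by
      rw [inter_eq_self_of_subset_right]
      intro u hu; exact le_of_lt hu.2
    rw [this, Real.volume_Ioo, sub_zero]

lemma map_QF (hab : a ≤ b) (ν : Measure ℝ) [IsFiniteMeasure ν]
    (hc : ν (Icc a b)ᶜ = 0) :
    Measure.map (QF a b ν) (volume.restrict (Ioo 0 (ν univ).toReal)) = ν := by
  set F : ℝ → ℝ := fun x => (ν (Iic x)).toReal with hF
  set M : ℝ := (ν univ).toReal with hMdef
  have hfin : ∀ s : Set ℝ, ν s ≠ ∞ := fun s => measure_ne_top ν s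
  have hF_mono : Monotone F := fun x y hxy =>
    ENNReal.toReal_mono (hfin _) (measure_mono (Iic_subset_Iic.2 hxy))
  have hF0 : ∀ x, 0 ≤ F x := fun x => ENNReal.toReal_nonneg
  have hFM : ∀ x, F x ≤ M := fun x =>
    ENNReal.toReal_mono (hfin _) (measure_mono (subset_univ _))
  have hFlt : ∀ x, x < a → ν (Iic x) = 0 := by
    intro x hx
    refine measure_mono_null (fun z hz => ?_) hc
    simp only [mem_compl_iff, mem_Icc, not_and, not_le]
    intro h2
    have h1 : z ≤ x := hz
    linarith
  have hFb : ν (Iic b) = ν univ := by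
    refine le_antisymm (measure_mono (subset_univ _)) ?_
    calc ν univ ≤ ν (Iic b ∪ (Icc a b)ᶜ) := by
          refine measure_mono (fun z _ => ?_)
          by_cases hzb : z ≤ b
          · exact Or.inl hzb
          · exact Or.inr (fun hmem => hzb hmem.2)
      _ ≤ ν (Iic b) + ν (Icc a b)ᶜ := measure_union_le _ _
      _ = ν (Iic b) := by rw [hc, add_zero]
  have hFbM : F b = M := by rw [hF]; simp only [hFb, hMdef]
  have hQmeas : Measurable (QF a b ν) := (QF_mono hab ν).measurable
  refine Measure.ext_of_Iic _ ν (fun x => ?_)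
  rw [Measure.map_apply hQmeas measurableSet_Iic,
    Measure.restrict_apply (hQmeas measurableSet_Iic)]
  set S : Set ℝ := QF a b ν ⁻¹' Iic x ∩ Ioo 0 M with hS
  -- lower bound
  have hsub1 : Iic (F x) ∩ Ioo 0 M ⊆ S := by
    rintro u ⟨hu1, hu2⟩
    refine ⟨?_, hu2⟩
    have hxa : a ≤ x := by
      by_contra hxa
      push_neg at hxa
      have : F x = 0 := by rw [hF]; simp [hFlt x hxa]
      rw [this] at hu1
      exact absurd hu2.1 (not_lt.2 hu1)
    have hxmem : x ∈ insert b {y | a ≤ y ∧ u ≤ F y} := Or.inr ⟨hxa, hu1⟩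
    exact csInf_le (Tset_bddBelow hab ν u) hxmem
  -- upper bound
  have hsub2 : ∀ ε : ℝ, 0 < ε → S ⊆ Iic (F (x + ε)) ∩ Ioo 0 M := by
    intro ε hε u hu
    refine ⟨?_, hu.2⟩
    have hlt : sInf (insert b {y | a ≤ y ∧ u ≤ F y}) < x + ε :=
      lt_of_le_of_lt hu.1 (by linarith)
    obtain ⟨y, hy, hyx⟩ := exists_lt_of_csInf_lt (Tset_nonempty ν u) hlt
    rcases hy with rfl | hy
    · have : u ≤ F y := by rw [hFbM]; exact le_of_lt hu.2.2
      exact le_trans this (hF_mono (le_of_lt hyx))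
    · exact le_trans hy.2 (hF_mono (le_of_lt hyx))
  have hεn : ∀ n : ℕ, (0:ℝ) < ((n:ℝ)+1)⁻¹ := fun n => by positivity
  have hup : ∀ n : ℕ, volume S ≤ ENNReal.ofReal (F (x + ((n:ℝ)+1)⁻¹)) := by
    intro n
    calc volume S ≤ volume (Iic (F (x + ((n:ℝ)+1)⁻¹)) ∩ Ioo 0 M) :=
          measure_mono (hsub2 _ (hεn n))
      _ = ENNReal.ofReal (F (x + ((n:ℝ)+1)⁻¹)) := vol_Iic_inter M (hF0 _) (hFM _)
  have hlow : ENNReal.ofReal (F x) ≤ volume S := by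
    rw [← vol_Iic_inter M (hF0 x) (hFM x)]
    exact measure_mono hsub1
  -- right continuity
  have hInter : (⋂ n : ℕ, Iic (x + ((n:ℝ)+1)⁻¹)) = Iic x := by
    ext z
    simp only [mem_iInter, mem_Iic]
    constructor
    · intro h
      by_contra hzx
      push_neg at hzx
      obtain ⟨n, hn⟩ := exists_nat_gt (z - x)⁻¹
      have hzx' : 0 < z - x := by linarith
      have h1 : ((n:ℝ)+1)⁻¹ < z - x := by
        rw [inv_lt_comm₀ (by positivity) hzx']
        calc (z - x)⁻¹ < n := hn
          _ < (n:ℝ) + 1 := by linarith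
      have := h n
      linarith
    · intro h n
      have := hεn n
      linarith
  have htend : Tendsto (fun n : ℕ => ν (Iic (x + ((n:ℝ)+1)⁻¹))) atTop (𝓝 (ν (Iic x))) := by
    have := tendsto_measure_iInter_atTop (μ := ν)
      (s := fun n : ℕ => Iic (x + ((n:ℝ)+1)⁻¹))
      (fun n => measurableSet_Iic.nullMeasurableSet)
      (fun m n hmn => Iic_subset_Iic.2 (by
        have : ((n:ℝ)+1)⁻¹ ≤ ((m:ℝ)+1)⁻¹ := by
          apply inv_anti₀ (by positivity)
          have : (m:ℝ) ≤ n := Nat.cast_le.2 hmn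
          linarith
        linarith))
      ⟨0, hfin _⟩
    rwa [hInter] at this
  have htend2 : Tendsto (fun n : ℕ => ENNReal.ofReal (F (x + ((n:ℝ)+1)⁻¹))) atTop
      (𝓝 (ν (Iic x))) := by
    have : ∀ n : ℕ, ENNReal.ofReal (F (x + ((n:ℝ)+1)⁻¹)) = ν (Iic (x + ((n:ℝ)+1)⁻¹)) := by
      intro n
      rw [hF]
      exact ENNReal.ofReal_toReal (hfin _)
    simp only [this]
    exact htend
  have hup' : volume S ≤ ν (Iic x) := ge_of_tendsto' htend2 hup
  have hlow' : ν (Iic x) ≤ volume S := by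
    rw [← ENNReal.ofReal_toReal (hfin (Iic x))]
    exact hlow
  exact le_antisymm hup' hlow'

end StrassenAux

open StrassenAux

/-- Strassen's theorem in one dimension: if `ν₊` and `ν₋` are
finite positive measures on `[a,b] ⊆ ℝ` with equal total mass and `ν₊`
stochastically dominates `ν₋` (`ν₊ [t,b] ≥ ν₋ [t,b]` for all `t`), then there is
a positive measure `γ` on `[a,b] × [a,b]` with first marginal `ν₊` and second
marginal `ν₋` such that `x ≥ y` `γ`-almost surely. -/
theorem strassen_one_dim (a b : ℝ) (hab : a ≤ b)
    (νp νm : Measure ℝ) [IsFiniteMeasure νp] [IsFiniteMeasure νm]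
    (hp : νp (Set.Icc a b)ᶜ = 0) (hm : νm (Set.Icc a b)ᶜ = 0)
    (htot : νp (Set.Icc a b) = νm (Set.Icc a b))
    (hdom : ∀ t : ℝ, νm (Set.Icc t b) ≤ νp (Set.Icc t b)) :
    ∃ γ : Measure (ℝ × ℝ),
      γ ((Set.Icc a b ×ˢ Set.Icc a b)ᶜ) = 0 ∧
      γ.map Prod.fst = νp ∧ γ.map Prod.snd = νm ∧
      (∀ᵐ p ∂γ, p.2 ≤ p.1) := by
  -- total masses agree
  have huniv : ∀ (ν : Measure ℝ), ν (Icc a b)ᶜ = 0 → ν univ = ν (Icc a b) := by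
    intro ν hc
    rw [← measure_add_measure_compl (measurableSet_Icc (a := a) (b := b)), hc, add_zero]
  have htotuniv : νp univ = νm univ := by
    rw [huniv νp hp, huniv νm hm, htot]
  set M : ℝ := (νp univ).toReal with hM
  -- Ioi x and Ioc x b agree in measure
  have hIoi : ∀ (ν : Measure ℝ), ν (Icc a b)ᶜ = 0 → ∀ x, ν (Ioi x) = ν (Ioc x b) := by
    intro ν hc x
    refine le_antisymm ?_ (measure_mono Ioc_subset_Ioi_self)
    calc ν (Ioi x) ≤ ν (Ioc x b ∪ (Icc a b)ᶜ) := by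
          refine measure_mono (fun z hz => ?_)
          by_cases hzb : z ≤ b
          · exact Or.inl ⟨hz, hzb⟩
          · exact Or.inr (fun hmem => hzb hmem.2)
      _ ≤ ν (Ioc x b) + ν (Icc a b)ᶜ := measure_union_le _ _
      _ = ν (Ioc x b) := by rw [hc, add_zero]
  -- domination on Ioc via increasing union of Icc
  have hIocUnion : ∀ x : ℝ, Ioc x b = ⋃ n : ℕ, Icc (x + ((n:ℝ)+1)⁻¹) b := by
    intro x
    ext z
    simp only [mem_Ioc, mem_iUnion, mem_Icc]
    constructor
    · rintro ⟨h1, h2⟩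
      obtain ⟨n, hn⟩ := exists_nat_gt (z - x)⁻¹
      have hzx : 0 < z - x := by linarith
      refine ⟨n, ?_, h2⟩
      have h3 : ((n:ℝ)+1)⁻¹ < z - x := by
        rw [inv_lt_comm₀ (by positivity) hzx]
        calc (z - x)⁻¹ < n := hn
          _ < (n:ℝ) + 1 := by linarith
      linarith
    · rintro ⟨n, h1, h2⟩
      have : (0:ℝ) < ((n:ℝ)+1)⁻¹ := by positivity
      exact ⟨by linarith, h2⟩
  have hIocMono : ∀ x : ℝ, Monotone (fun n : ℕ => Icc (x + ((n:ℝ)+1)⁻¹) b) := by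
    intro x m n hmn
    apply Icc_subset_Icc_left
    have h1 : ((n:ℝ)+1)⁻¹ ≤ ((m:ℝ)+1)⁻¹ := by
      apply inv_anti₀ (by positivity)
      have : (m:ℝ) ≤ n := Nat.cast_le.2 hmn
      linarith
    linarith
  have hIocDom : ∀ x : ℝ, νm (Ioc x b) ≤ νp (Ioc x b) := by
    intro x
    rw [hIocUnion x, (hIocMono x).measure_iUnion, (hIocMono x).measure_iUnion]
    exact iSup_mono (fun n => hdom _)
  -- CDF comparison
  have hFcomp : ∀ x, νp (Iic x) ≤ νm (Iic x) := by
    intro x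
    have e1 : ∀ (ν : Measure ℝ), ν (Icc a b)ᶜ = 0 → ν (Iic x) + ν (Ioc x b) = ν univ := by
      intro ν hc
      rw [← hIoi ν hc x, ← compl_Iic]
      exact measure_add_measure_compl measurableSet_Iic
    have e2 : νp (Iic x) + νp (Ioc x b) ≤ νm (Iic x) + νp (Ioc x b) := by
      calc νp (Iic x) + νp (Ioc x b) = νp univ := e1 νp hp
        _ = νm univ := htotuniv
        _ = νm (Iic x) + νm (Ioc x b) := (e1 νm hm).symm
        _ ≤ νm (Iic x) + νp (Ioc x b) := add_le_add (le_refl _) (hIocDom x)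
    exact (ENNReal.add_le_add_iff_right (measure_ne_top νp _)).1 e2
  have hFcompR : ∀ x, (νp (Iic x)).toReal ≤ (νm (Iic x)).toReal := fun x =>
    ENNReal.toReal_mono (measure_ne_top νm _) (hFcomp x)
  -- the coupling
  set Qp : ℝ → ℝ := QF a b νp with hQp
  set Qm : ℝ → ℝ := QF a b νm with hQm
  have hQp_meas : Measurable Qp := (QF_mono hab νp).measurable
  have hQm_meas : Measurable Qm := (QF_mono hab νm).measurable
  have hpair : Measurable (fun u => (Qp u, Qm u)) := hQp_meas.prodMk hQm_meas
  set μ : Measure ℝ := volume.restrict (Ioo 0 M) with hμ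
  refine ⟨Measure.map (fun u => (Qp u, Qm u)) μ, ?_, ?_, ?_, ?_⟩
  · rw [Measure.map_apply hpair ((measurableSet_Icc.prod measurableSet_Icc).compl)]
    have hpre : (fun u => (Qp u, Qm u)) ⁻¹' (Icc a b ×ˢ Icc a b)ᶜ = ∅ := by
      ext u
      simp only [mem_preimage, mem_compl_iff, mem_prod, mem_Icc, mem_empty_iff_false,
        iff_false, not_not, Decidable.not_not]
      exact ⟨⟨QF_ge hab νp u, QF_le_b hab νp u⟩, ⟨QF_ge hab νm u, QF_le_b hab νm u⟩⟩
    rw [hpre]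
    exact measure_empty
  · rw [Measure.map_map measurable_fst hpair]
    have : (Prod.fst ∘ fun u => (Qp u, Qm u)) = Qp := rfl
    rw [this]
    exact map_QF hab νp hp
  · rw [Measure.map_map measurable_snd hpair]
    have h1 : (Prod.snd ∘ fun u => (Qp u, Qm u)) = Qm := rfl
    have h2 : M = (νm univ).toReal := by rw [hM, htotuniv]
    rw [h1, hμ, h2]
    exact map_QF hab νm hm
  · have hset : MeasurableSet {p : ℝ × ℝ | p.2 ≤ p.1} :=
      measurableSet_le measurable_snd measurable_fst
    rw [ae_iff]
    have hid : {p : ℝ × ℝ | ¬ p.2 ≤ p.1} = {p : ℝ × ℝ | p.2 ≤ p.1}ᶜ := rfl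
    rw [hid, Measure.map_apply hpair hset.compl]
    have hpre : (fun u => (Qp u, Qm u)) ⁻¹' {p : ℝ × ℝ | p.2 ≤ p.1}ᶜ = ∅ := by
      ext u
      simp only [mem_preimage, mem_compl_iff, mem_setOf_eq, mem_empty_iff_false,
        iff_false, not_not, Decidable.not_not]
      exact QF_comp hab νp νm hFcompR u
    rw [hpre]
    exact measure_empty
end

section
/- For the grand-bundling mechanism at price p = √(8/3) in the non-additive two-item setting, the zero cell {(x₁,x₂) ∈ [0,1]² : 2(x₁+x₂) ≤ √(8/3)} has μ-measure zero: the interior integral of −3 over the triangle {x₁,x₂ ≥ 0, x₁+x₂ ≤ √(8/3)/2} equals −1, cancelling the point mass +1 at the origin. -/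
open MeasureTheory Classical

/-- The transformed measure `μ` for the two-item i.i.d. uniform `[0,1]` setting,
as a set function: density `−3` on the interior of the unit square, a point mass
`+1` at the origin, and uniform density `+1` on each of the boundary segments
`{1}×[0,1]` and `[0,1]×{1}`. -/
noncomputable def muUnif (A : Set (ℝ × ℝ)) : ℝ :=
  (∫ x in A ∩ (Set.Ioo (0:ℝ) 1 ×ˢ Set.Ioo (0:ℝ) 1), (-3 : ℝ)) +
  (if ((0 : ℝ), (0 : ℝ)) ∈ A then (1 : ℝ) else 0) +
  (volume {t : ℝ | t ∈ Set.Icc (0:ℝ) 1 ∧ ((1 : ℝ), t) ∈ A}).toReal +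
  (volume {t : ℝ | t ∈ Set.Icc (0:ℝ) 1 ∧ (t, (1 : ℝ)) ∈ A}).toReal

/-- The zero cell of the grand-bundling mechanism at price `√(8/3)` in the
non-additive two-item setting. -/
noncomputable def zeroCellBundle : Set (ℝ × ℝ) :=
  {p : ℝ × ℝ | p.1 ∈ Set.Icc (0:ℝ) 1 ∧ p.2 ∈ Set.Icc (0:ℝ) 1 ∧
    2 * (p.1 + p.2) ≤ Real.sqrt (8/3)}

lemma line_null (s : ℝ) : volume {p : ℝ × ℝ | p.1 + p.2 = s} = 0 := by
  have hm : MeasurableSet {p : ℝ × ℝ | p.1 + p.2 = s} :=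
    measurableSet_eq_fun (by fun_prop) measurable_const
  rw [MeasureTheory.Measure.volume_eq_prod, MeasureTheory.Measure.prod_apply hm]
  have : ∀ x : ℝ, (Prod.mk x ⁻¹' {p : ℝ × ℝ | p.1 + p.2 = s}) = {s - x} := by
    intro x; ext y; simp [Set.mem_preimage]; constructor <;> intro h <;> linarith
  simp only [this, Real.volume_singleton]
  simp

lemma sq_s : (Real.sqrt (8/3) / 2) ^ 2 = 2/3 := by
  rw [div_pow, Real.sq_sqrt (by norm_num : (0:ℝ) ≤ 8/3)]
  norm_num

/-- the zero cell `{(x₁,x₂) ∈ [0,1]² : 2(x₁+x₂) ≤ √(8/3)}` has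
`μ`-measure zero: the interior integral of `−3` over the triangle equals `−1`,
cancelling the point mass `+1` at the origin. -/
theorem zero_cell_bundle_integrates_to_zero :
    (∫ x in zeroCellBundle ∩ (Set.Ioo (0:ℝ) 1 ×ˢ Set.Ioo (0:ℝ) 1), (-3 : ℝ)) = -1 ∧
    muUnif zeroCellBundle = 0 := by
  set s : ℝ := Real.sqrt (8/3) / 2 with hs_def
  have hs0 : 0 < s := by
    have : 0 < Real.sqrt (8/3) := Real.sqrt_pos.mpr (by norm_num)
    positivity
  have hs2 : s ^ 2 = 2/3 := sq_s
  have hs1 : s < 1 := by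
    nlinarith [hs0]
  -- the region
  set A := zeroCellBundle ∩ (Set.Ioo (0:ℝ) 1 ×ˢ Set.Ioo (0:ℝ) 1) with hA
  have hA' : A = {p : ℝ × ℝ | p.1 ∈ Set.Ioo (0:ℝ) 1 ∧ p.2 ∈ Set.Ioo (0:ℝ) 1 ∧ p.1 + p.2 ≤ s} := by
    ext p
    simp only [hA, zeroCellBundle, Set.mem_inter_iff, Set.mem_setOf_eq, Set.mem_prod,
      Set.mem_Ioo, Set.mem_Icc]
    constructor
    · rintro ⟨⟨_, _, h3⟩, ⟨h4, h5⟩⟩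
      exact ⟨h4, h5, by rw [hs_def]; linarith⟩
    · rintro ⟨⟨h1, h2⟩, ⟨h3, h4⟩, h5⟩
      rw [hs_def] at h5
      exact ⟨⟨⟨h1.le, h2.le⟩, ⟨h3.le, h4.le⟩, by linarith⟩, ⟨h1, h2⟩, ⟨h3, h4⟩⟩
  set T := regionBetween (fun _ => (0:ℝ)) (fun x => s - x) (Set.Ioo 0 s) with hT
  have hTsub : T ⊆ A := by
    intro p hp
    obtain ⟨⟨h1, h2⟩, h3, h4⟩ := hp
    rw [hA']
    simp only [Set.mem_setOf_eq, Set.mem_Ioo] at *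
    refine ⟨⟨h1, lt_trans h2 hs1⟩, ⟨h3, ?_⟩, by linarith⟩
    have : p.2 < s - p.1 := h4
    nlinarith
  have hdiff : A \ T ⊆ {p : ℝ × ℝ | p.1 + p.2 = s} := by
    intro p hp
    obtain ⟨hpA, hpT⟩ := hp
    rw [hA'] at hpA
    simp only [Set.mem_setOf_eq, Set.mem_Ioo] at hpA ⊢
    obtain ⟨⟨h1, h2⟩, ⟨h3, h4⟩, h5⟩ := hpA
    by_contra hne
    apply hpT
    have hlt : p.1 + p.2 < s := lt_of_le_of_ne h5 hne
    refine ⟨⟨h1, by linarith⟩, h3, ?_⟩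
    show p.2 < s - p.1
    linarith
  have hAT : A =ᵐ[volume] T := by
    refine (MeasureTheory.ae_eq_set.mpr ⟨?_, ?_⟩)
    · exact measure_mono_null hdiff (line_null s)
    · rw [Set.diff_eq_empty.mpr hTsub]; simp
  have hvolT : volume T = ENNReal.ofReal (1/3) := by
    rw [MeasureTheory.Measure.volume_eq_prod]
    rw [volume_regionBetween_eq_integral
      ((integrableOn_const_iff (C := (0:ℝ))).mpr (Or.inr measure_Ioo_lt_top))
      (show IntegrableOn (fun x => s - x) (Set.Ioo 0 s) volume from
        (((continuous_const.sub continuous_id').integrableOn_Icc).mono_set Set.Ioo_subset_Icc_self))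
      measurableSet_Ioo (fun x hx => by simp only [Set.mem_Ioo] at hx; show (0:ℝ) ≤ s - x; linarith [hx.2])]
    congr 1
    simp only [Pi.sub_apply, sub_zero]
    rw [← MeasureTheory.integral_Ioc_eq_integral_Ioo, ← intervalIntegral.integral_of_le hs0.le]
    rw [intervalIntegral.integral_sub intervalIntegrable_const intervalIntegral.intervalIntegrable_id,
      intervalIntegral.integral_const, integral_id]
    simp only [smul_eq_mul, sub_zero]
    nlinarith [hs2]
  have hvolA : volume A = ENNReal.ofReal (1/3) := by
    rw [measure_congr hAT, hvolT]
  have hint : (∫ x in A, (-3 : ℝ)) = -1 := by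
    rw [MeasureTheory.setIntegral_const, measureReal_def, hvolA, ENNReal.toReal_ofReal (by norm_num)]
    norm_num
  refine ⟨hint, ?_⟩
  unfold muUnif
  rw [← hA, hint]
  have hsqrt2 : Real.sqrt (8/3) < 2 := by
    nlinarith [hs0, hs_def]
  have h00 : ((0:ℝ), (0:ℝ)) ∈ zeroCellBundle := by
    constructor
    · simp
    constructor
    · simp
    · simp
      positivity
  have hE1 : {t : ℝ | t ∈ Set.Icc (0:ℝ) 1 ∧ ((1:ℝ), t) ∈ zeroCellBundle} = ∅ := by
    ext t; simp only [Set.mem_setOf_eq, Set.mem_empty_iff_false, iff_false]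
    rintro ⟨⟨ht0, ht1⟩, _, _, h⟩
    linarith
  have hE2 : {t : ℝ | t ∈ Set.Icc (0:ℝ) 1 ∧ (t, (1:ℝ)) ∈ zeroCellBundle} = ∅ := by
    ext t; simp only [Set.mem_setOf_eq, Set.mem_empty_iff_false, iff_false]
    rintro ⟨⟨ht0, ht1⟩, _, _, h⟩
    linarith
  rw [hE1, hE2, if_pos h00]
  simp
end

section
/- If S ⊆ ℝⁿ is compact and x ≠ y in ℝⁿ, then the supremum ℓ_S(x,y) = sup_{s∈S} s·(x−y) is attained, and every maximizer lies in the exposed set exp(S) = {s ∈ S : ∃ x,y ∈ X, s·(x−y) = ℓ_S(x,y)}; consequently if γ* is supported on pairs (x,y) with u*(x) − u*(y) = ℓ_S(x,y), then γ*-almost every pair shares a common subgradient s ∈ exp(S) of u* at both x and y. -/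
open MeasureTheory

/-- `exp(S)`: the union of exposed faces of `S` with respect to directions in
`X − X`. -/
noncomputable def exposedSet {n : ℕ} (X S : Set (Fin n → ℝ)) : Set (Fin n → ℝ) :=
  {s ∈ S | ∃ x ∈ X, ∃ y ∈ X, (∑ i, s i * (x i - y i)) = ellS S x y}

lemma ellS_attained {n : ℕ} {S : Set (Fin n → ℝ)} (hS : IsCompact S)
    (hSne : S.Nonempty) (x y : Fin n → ℝ) :
    ∃ s ∈ S, (∑ i, s i * (x i - y i)) = ellS S x y ∧
      ∀ s' ∈ S, (∑ i, s' i * (x i - y i)) ≤ ellS S x y := by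
  have hcont : Continuous fun s : Fin n → ℝ => ∑ i, s i * (x i - y i) := by
    exact continuous_finset_sum _ fun i _ => (continuous_apply i).mul continuous_const
  obtain ⟨s, hsS, hmax⟩ := hS.exists_isMaxOn hSne hcont.continuousOn
  have hgr : IsGreatest {r : ℝ | ∃ s ∈ S, r = ∑ i, s i * (x i - y i)}
      (∑ i, s i * (x i - y i)) := by
    constructor
    · exact ⟨s, hsS, rfl⟩
    · rintro r ⟨s', hs', rfl⟩
      exact hmax hs'
  have heq : (∑ i, s i * (x i - y i)) = ellS S x y := (hgr.csSup_eq).symm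
  exact ⟨s, hsS, heq, fun s' hs' => heq ▸ hmax hs'⟩

/-- for compact nonempty `S` and `x ≠ y` in `X`, the supremum
`ℓ_S(x,y)` is attained, every maximizer lies in `exp(S)`, and if `γ*` is
supported on pairs with `u*(x) − u*(y) = ℓ_S(x,y)` then `γ*`-a.e. pair shares a
common subgradient `s ∈ exp(S)` of `u*` at both points. -/
theorem exposed_allocations {n : ℕ} (X S : Set (Fin n → ℝ))
    (hX : IsCompact X) (hXc : Convex ℝ X)
    (hS : IsCompact S) (hSne : S.Nonempty)
    (ustar : (Fin n → ℝ) → ℝ) (hconv : ConvexOn ℝ X ustar)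
    (hsub : ∀ y ∈ X, ∃ s ∈ S, ∀ x ∈ X,
      ustar y + ∑ i, s i * (x i - y i) ≤ ustar x)
    (γ : Measure ((Fin n → ℝ) × (Fin n → ℝ))) [IsFiniteMeasure γ]
    (hγX : γ (X ×ˢ X)ᶜ = 0)
    (hγtight : ∀ᵐ p ∂γ, ustar p.1 - ustar p.2 = ellS S p.1 p.2) :
    (∀ x ∈ X, ∀ y ∈ X, x ≠ y →
      (∃ s ∈ S, (∑ i, s i * (x i - y i)) = ellS S x y) ∧
      (∀ s ∈ S, (∑ i, s i * (x i - y i)) = ellS S x y → s ∈ exposedSet X S)) ∧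
    (∀ᵐ p ∂γ, ∃ s ∈ exposedSet X S,
      (∀ z ∈ X, ustar p.1 + ∑ i, s i * (z i - p.1 i) ≤ ustar z) ∧
      (∀ z ∈ X, ustar p.2 + ∑ i, s i * (z i - p.2 i) ≤ ustar z)) := by
  constructor
  · intro x hx y hy _
    obtain ⟨s, hsS, heq, hub⟩ := ellS_attained hS hSne x y
    refine ⟨⟨s, hsS, heq⟩, ?_⟩
    intro s' hs' heq'
    exact ⟨hs', x, hx, y, hy, heq'⟩
  · have hmem : ∀ᵐ p ∂γ, p.1 ∈ X ∧ p.2 ∈ X := by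
      rw [MeasureTheory.ae_iff]
      have hset : {p : (Fin n → ℝ) × (Fin n → ℝ) | ¬(p.1 ∈ X ∧ p.2 ∈ X)} = (X ×ˢ X)ᶜ := by
        ext p; simp [Set.mem_prod]
      rw [hset]; exact hγX
    filter_upwards [hmem, hγtight] with p hp htight
    obtain ⟨hp1, hp2⟩ := hp
    obtain ⟨s, hsS, hsub1⟩ := hsub p.1 hp1
    -- s is a subgradient at p.1; show it attains ellS S p.1 p.2
    have hle : (∑ i, s i * (p.1 i - p.2 i)) ≤ ellS S p.1 p.2 :=
      (ellS_attained hS hSne p.1 p.2).choose_spec.2.2 s hsS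
    have hge : ellS S p.1 p.2 ≤ ∑ i, s i * (p.1 i - p.2 i) := by
      have := hsub1 p.2 hp2
      have h2 : ustar p.1 - ustar p.2 ≤ ∑ i, s i * (p.1 i - p.2 i) := by
        have : ustar p.1 + ∑ i, s i * (p.2 i - p.1 i) ≤ ustar p.2 := this
        have hneg : (∑ i, s i * (p.2 i - p.1 i)) = -∑ i, s i * (p.1 i - p.2 i) := by
          rw [← Finset.sum_neg_distrib]
          congr 1; ext i; ring
        linarith [this, hneg ▸ this]
      linarith [htight ▸ h2]
    have heq : (∑ i, s i * (p.1 i - p.2 i)) = ellS S p.1 p.2 := le_antisymm hle hge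
    refine ⟨s, ⟨hsS, p.1, hp1, p.2, hp2, heq⟩, hsub1, ?_⟩
    intro z hz
    have h3 := hsub1 z hz
    have key : (∑ i, s i * (z i - p.2 i)) = (∑ i, s i * (z i - p.1 i)) + ∑ i, s i * (p.1 i - p.2 i) := by
      rw [← Finset.sum_add_distrib]
      congr 1; ext i; ring
    have hval : (∑ i, s i * (p.1 i - p.2 i)) = ustar p.1 - ustar p.2 := by
      rw [heq, ← htight]
    rw [key, hval]
    linarith
end
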